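/- Let A ∈ SL(n,ℂ) be a semisimple (diagonalizable) element that is reversible in SL(n,ℂ). Then A is strongly reversible in SL(n,ℂ) (a product of two involutions of SL(n,ℂ)) if and only if 1 or −1 is an eigenvalue of A, or n ≢ 2 (mod 4). -/

import Mathlib

open Polynomial Matrix

variable {m : Type*} [DecidableEq m] [Fintype m] {R : Type*} [CommRing R]

lemma my_charpoly_units_conj (u : (Matrix m m R)ˣ) (a : Matrix m m R) :
    ((u : Matrix m m R) * a * ((u⁻¹ : (Matrix m m R)ˣ) : Matrix m m R)).charpoly = a.charpoly := by
  have h1 : (C : R →+* R[X]).mapMatrix ((u : Matrix m m R) * a * ((u⁻¹ : (Matrix m m R)ˣ) : Matrix m m R))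
      = (C : R →+* R[X]).mapMatrix (u : Matrix m m R) * (C : R →+* R[X]).mapMatrix a *
        (C : R →+* R[X]).mapMatrix ((u⁻¹ : (Matrix m m R)ˣ) : Matrix m m R) := by
    rw [_root_.map_mul, _root_.map_mul]
  have h2 : (C : R →+* R[X]).mapMatrix (u : Matrix m m R) *
      (C : R →+* R[X]).mapMatrix ((u⁻¹ : (Matrix m m R)ˣ) : Matrix m m R) = 1 := by
    rw [← _root_.map_mul, Units.mul_inv, _root_.map_one]
  have key : charmatrix ((u : Matrix m m R) * a * ((u⁻¹ : (Matrix m m R)ˣ) : Matrix m m R))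
      = (C : R →+* R[X]).mapMatrix (u : Matrix m m R) * charmatrix a *
        (C : R →+* R[X]).mapMatrix ((u⁻¹ : (Matrix m m R)ˣ) : Matrix m m R) := by
    unfold charmatrix
    rw [h1, mul_sub, sub_mul]
    congr 1
    rw [mul_assoc, (Matrix.scalar_commute (X : R[X]) (Commute.all X) _).eq, ← mul_assoc, h2,
      one_mul]
  unfold Matrix.charpoly
  rw [key, Matrix.det_mul, Matrix.det_mul, mul_right_comm, ← Matrix.det_mul, h2, Matrix.det_one,
    one_mul]

lemma my_charpoly_diagonal (d : m → R) :
    (Matrix.diagonal d).charpoly = ∏ i, (X - C (d i)) := by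
  unfold Matrix.charpoly
  have : charmatrix (Matrix.diagonal d) = Matrix.diagonal (fun i => X - C (d i)) := by
    ext i j
    by_cases h : i = j
    · subst h; simp
    · rw [charmatrix_apply_ne _ _ _ h, diagonal_apply_ne _ h, diagonal_apply_ne _ h, map_zero,
        neg_zero]
  rw [this, det_diagonal]

lemma my_roots_charpoly_diagonal (d : m → R) [IsDomain R] :
    (Matrix.diagonal d).charpoly.roots = Finset.univ.val.map d := by
  rw [my_charpoly_diagonal, Finset.prod_eq_multiset_prod]
  have : Multiset.map (fun i => X - C (d i)) Finset.univ.val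
      = Multiset.map (fun a => X - C a) (Multiset.map d Finset.univ.val) := by
    rw [Multiset.map_map]; rfl
  rw [this, Polynomial.roots_multiset_prod_X_sub_C]

lemma my_mem_spectrum_of_root {K : Type*} [Field K] (a : Matrix m m K) (μ : K)
    (h : a.charpoly.IsRoot μ) : μ ∈ spectrum K a := by
  rw [spectrum.mem_iff]
  rw [Matrix.isUnit_iff_isUnit_det]
  have hdet : (algebraMap K (Matrix m m K) μ - a).det = a.charpoly.eval μ := by
    unfold Matrix.charpoly
    rw [show Polynomial.eval μ a.charmatrix.det = (Polynomial.evalRingHom μ) a.charmatrix.det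
      from rfl, RingHom.map_det]
    congr 1
    ext i j
    by_cases hij : i = j
    · subst hij; simp [Matrix.algebraMap_matrix_apply]
    · simp [charmatrix_apply_ne _ _ _ hij, Matrix.algebraMap_matrix_apply, hij]
  rw [hdet, h.eq_zero]
  simp

open Equiv

lemma my_sign_involution : ∀ (m : ℕ) {α : Type*} [DecidableEq α] [Fintype α]
    (σ : Equiv.Perm α), σ.support.card ≤ m → σ * σ = 1 →
    ∃ k, σ.support.card = 2 * k ∧ Equiv.Perm.sign σ = (-1) ^ k := by
  intro m
  induction m with
  | zero =>
    intro α _ _ σ hcard _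
    have : σ = 1 := by
      rwa [Nat.le_zero, Finset.card_eq_zero, Equiv.Perm.support_eq_empty_iff] at hcard
    exact ⟨0, by simp [this]⟩
  | succ m ih =>
    intro α _ _ σ hcard hinv
    by_cases h1 : σ = 1
    · exact ⟨0, by simp [h1]⟩
    obtain ⟨i, hi⟩ : ∃ i, σ i ≠ i := by
      by_contra hc; push_neg at hc; exact h1 (Equiv.ext hc)
    have hσσ : ∀ x, σ (σ x) = x := fun x => by
      have h := congrArg (fun τ : Equiv.Perm α => τ x) hinv
      simpa using h
    set t := Equiv.swap i (σ i) with ht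
    have htt : t * t = 1 := Equiv.swap_mul_self _ _
    have hcomm : σ * t = t * σ := by
      have h0 : Equiv.swap (σ i) (σ (σ i)) = σ * t * σ⁻¹ := Equiv.swap_apply_apply σ i (σ i)
      have h0' : t = σ * t * σ⁻¹ := by
        rw [← h0, hσσ, Equiv.swap_comm]
      calc σ * t = (σ * t * σ⁻¹) * σ := by group
      _ = t * σ := by rw [← h0']
    set σ' := t * σ with hσ'
    have hinv' : σ' * σ' = 1 := by
      calc t * σ * (t * σ) = t * (σ * t) * σ := by group
      _ = t * (t * σ) * σ := by rw [hcomm]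
      _ = (t * t) * (σ * σ) := by group
      _ = 1 := by rw [htt, hinv, one_mul]
    have happi : σ' i = i := by
      simp [hσ', Equiv.Perm.mul_apply, ht, Equiv.swap_apply_right]
    have happsi : σ' (σ i) = σ i := by
      simp [hσ', Equiv.Perm.mul_apply, hσσ i, ht, Equiv.swap_apply_left]
    have happ : ∀ j, j ≠ i → j ≠ σ i → σ' j = σ j := by
      intro j hji hjsi
      have h2 : σ j ≠ i := fun h => hjsi (by rw [← hσσ j, h])
      have h3 : σ j ≠ σ i := fun h => hji (σ.injective h)
      simp [hσ', Equiv.Perm.mul_apply, ht, Equiv.swap_apply_of_ne_of_ne h2 h3]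
    have hsupp : σ'.support = (σ.support.erase i).erase (σ i) := by
      ext j
      simp only [Equiv.Perm.mem_support, Finset.mem_erase]
      by_cases hji : j = i
      · subst hji; simp [happi, hi]
      · by_cases hjsi : j = σ i
        · subst hjsi; simp [happsi]
        · simp [happ j hji hjsi, hji, hjsi]
    have hisupp : i ∈ σ.support := Equiv.Perm.mem_support.2 hi
    have hsisupp : σ i ∈ σ.support.erase i := by
      refine Finset.mem_erase.2 ⟨hi, Equiv.Perm.mem_support.2 ?_⟩
      rw [hσσ i]; exact fun h => hi h.symm
    have hc2 : 2 ≤ σ.support.card := by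
      have hss : ({i, σ i} : Finset α) ⊆ σ.support := by
        intro x hx
        rcases Finset.mem_insert.1 hx with rfl | hx
        · exact hisupp
        · rw [Finset.mem_singleton.1 hx]; exact Finset.mem_of_mem_erase hsisupp
      have hcard2 : ({i, σ i} : Finset α).card = 2 := by
        rw [Finset.card_insert_of_notMem (by simp [Ne.symm hi]), Finset.card_singleton]
      calc 2 = ({i, σ i} : Finset α).card := hcard2.symm
      _ ≤ _ := Finset.card_le_card hss
    have hc1 : σ'.support.card = σ.support.card - 2 := by
      rw [hsupp, Finset.card_erase_of_mem hsisupp, Finset.card_erase_of_mem hisupp]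
      omega
    obtain ⟨k, hk, hsign⟩ := ih σ' (by omega) hinv'
    refine ⟨k + 1, by omega, ?_⟩
    have hts : σ = t * σ' := by rw [hσ', ← mul_assoc, htt, one_mul]
    rw [hts, _root_.map_mul, hsign, Equiv.Perm.sign_swap hi.symm, pow_succ]
    rw [mul_comm]

open scoped Classical in
lemma my_pairing {α : Type*} [DecidableEq α] [Fintype α] (d : α → ℂ) :
    ∀ s : Finset α,
      (∀ c : ℂ, (s.filter fun i => d i = c).card = (s.filter fun i => d i = c⁻¹).card) →
      ∃ f : α → α, Function.Involutive f ∧ (∀ i, i ∉ s → f i = i) ∧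
        (∀ i ∈ s, f i ∈ s) ∧ (∀ i ∈ s, d (f i) = (d i)⁻¹) ∧
        (∀ i ∈ s, d i = (d i)⁻¹ → f i = i) := by
  intro s
  induction s using Finset.strongInduction with
  | _ s ih =>
    intro H
    rcases s.eq_empty_or_nonempty with rfl | ⟨i, hi⟩
    · exact ⟨id, fun _ => rfl, fun _ _ => rfl, by simp, by simp, by simp⟩
    by_cases h1 : d i = (d i)⁻¹
    · have hsub : s.erase i ⊂ s := Finset.erase_ssubset hi
      have H' : ∀ c : ℂ, ((s.erase i).filter fun j => d j = c).card
          = ((s.erase i).filter fun j => d j = c⁻¹).card := by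
        intro c
        by_cases hc : c = d i
        · have heq : ((s.erase i).filter fun j => d j = c⁻¹)
              = ((s.erase i).filter fun j => d j = c) := by
            apply Finset.filter_congr
            intro j _
            rw [hc, ← h1]
          rw [heq]
        · have hc2 : c⁻¹ ≠ d i := fun h => hc (by rw [← inv_inv c, h, ← h1])
          rw [Finset.filter_erase, Finset.filter_erase, Finset.erase_eq_of_notMem,
            Finset.erase_eq_of_notMem]
          · exact H c
          · exact fun hmem => hc2 ((Finset.mem_filter.1 hmem).2.symm)
          · exact fun hmem => hc ((Finset.mem_filter.1 hmem).2.symm)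
      obtain ⟨f, hfinv, hout, hmem, hdinv, hfixed⟩ := ih _ hsub H'
      have hfi : f i = i := hout i (fun h => (Finset.mem_erase.1 h).1 rfl)
      refine ⟨f, hfinv, ?_, ?_, ?_, ?_⟩
      · intro j hj; exact hout j (fun hj' => hj (Finset.mem_of_mem_erase hj'))
      · intro j hj
        by_cases hji : j = i
        · subst hji; rw [hfi]; exact hj
        · exact Finset.mem_of_mem_erase (hmem j (Finset.mem_erase.2 ⟨hji, hj⟩))
      · intro j hj
        by_cases hji : j = i
        · subst hji; rw [hfi]; exact h1
        · exact hdinv j (Finset.mem_erase.2 ⟨hji, hj⟩)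
      · intro j hj hdj
        by_cases hji : j = i
        · subst hji; exact hfi
        · exact hfixed j (Finset.mem_erase.2 ⟨hji, hj⟩) hdj
    · obtain ⟨j, hjs, hdj⟩ : ∃ j, j ∈ s ∧ d j = (d i)⁻¹ := by
        have hcount := H (d i)
        have hipos : 0 < (s.filter fun k => d k = d i).card :=
          Finset.card_pos.2 ⟨i, Finset.mem_filter.2 ⟨hi, rfl⟩⟩
        rw [hcount] at hipos
        obtain ⟨j, hj⟩ := Finset.card_pos.1 hipos
        have hj' := Finset.mem_filter.1 hj
        exact ⟨j, hj'.1, hj'.2⟩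
      have hji : j ≠ i := by intro h; subst h; exact h1 hdj
      set s' := (s.erase i).erase j with hs'
      have hsub : s' ⊂ s :=
        Finset.ssubset_of_subset_of_ssubset (Finset.erase_subset _ _) (Finset.erase_ssubset hi)
      have hinotin : i ∉ s' := fun h =>
        (Finset.mem_erase.1 (Finset.mem_of_mem_erase h)).1 rfl
      have hjnotin : j ∉ s' := fun h => (Finset.mem_erase.1 h).1 rfl
      have H' : ∀ c : ℂ, (s'.filter fun k => d k = c).card
          = (s'.filter fun k => d k = c⁻¹).card := by
        intro c
        rw [hs', Finset.filter_erase, Finset.filter_erase, Finset.filter_erase,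
          Finset.filter_erase]
        by_cases hc1 : c = d i
        · have hjp : j ∉ (s.filter fun k => d k = c) := fun h => by
            have h2 := (Finset.mem_filter.1 h).2
            rw [hdj, hc1] at h2
            exact h1 h2.symm
          have hip : i ∈ (s.filter fun k => d k = c) :=
            Finset.mem_filter.2 ⟨hi, hc1.symm⟩
          have hiq : i ∉ (s.filter fun k => d k = c⁻¹) := fun h => by
            have h2 := (Finset.mem_filter.1 h).2
            rw [hc1] at h2
            exact h1 h2
          have hjq : j ∈ (s.filter fun k => d k = c⁻¹) :=
            Finset.mem_filter.2 ⟨hjs, by rw [hdj, hc1]⟩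
          rw [Finset.erase_eq_of_notMem (fun h => hjp (Finset.mem_of_mem_erase h)),
            Finset.card_erase_of_mem hip, Finset.erase_eq_of_notMem hiq,
            Finset.card_erase_of_mem hjq, H c]
        · by_cases hc2 : c = (d i)⁻¹
          · have hcinv : c⁻¹ = d i := by rw [hc2, inv_inv]
            have hip : i ∉ (s.filter fun k => d k = c) := fun h => by
              have h2 := (Finset.mem_filter.1 h).2
              rw [hc2] at h2
              exact h1 h2
            have hjp : j ∈ (s.filter fun k => d k = c) :=
              Finset.mem_filter.2 ⟨hjs, by rw [hdj, hc2]⟩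
            have hiq : i ∈ (s.filter fun k => d k = c⁻¹) :=
              Finset.mem_filter.2 ⟨hi, hcinv.symm⟩
            have hjq : j ∉ (s.filter fun k => d k = c⁻¹) := fun h => by
              have h2 := (Finset.mem_filter.1 h).2
              rw [hdj, hcinv] at h2
              exact h1 h2.symm
            rw [Finset.erase_eq_of_notMem hip, Finset.card_erase_of_mem hjp,
              Finset.erase_eq_of_notMem (fun h => hjq (Finset.mem_of_mem_erase h)),
              Finset.card_erase_of_mem hiq, H c]
          · have hip : i ∉ (s.filter fun k => d k = c) := fun h =>
              hc1 ((Finset.mem_filter.1 h).2.symm)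
            have hjp : j ∉ (s.filter fun k => d k = c) := fun h => by
              have h2 := (Finset.mem_filter.1 h).2
              rw [hdj] at h2
              exact hc2 (by rw [← h2])
            have hiq : i ∉ (s.filter fun k => d k = c⁻¹) := fun h => by
              have h2 := (Finset.mem_filter.1 h).2
              exact hc2 (by rw [← inv_inv c, ← h2])
            have hjq : j ∉ (s.filter fun k => d k = c⁻¹) := fun h => by
              have h2 := (Finset.mem_filter.1 h).2
              rw [hdj] at h2
              have : c = d i := by rw [← inv_inv c, ← h2, inv_inv]
              exact hc1 this
            rw [Finset.erase_eq_of_notMem hip, Finset.erase_eq_of_notMem hjp,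
              Finset.erase_eq_of_notMem hiq, Finset.erase_eq_of_notMem hjq]
            exact H c
      obtain ⟨f, hfinv, hout, hmem, hdinv, hfixed⟩ := ih s' hsub H'
      have hnotij : ∀ k, k ≠ i → k ≠ j → f k ≠ i ∧ f k ≠ j ∧ f (f k) = k := by
        intro k hki hkj
        by_cases hks : k ∈ s'
        · exact ⟨fun h => hinotin (h ▸ hmem k hks), fun h => hjnotin (h ▸ hmem k hks), hfinv k⟩
        · rw [hout k hks]
          exact ⟨hki, hkj, hout k hks ▸ hout k hks⟩
      refine ⟨fun k => if k = i then j else if k = j then i else f k, ?_, ?_, ?_, ?_, ?_⟩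
      · intro k
        by_cases hki : k = i
        · simp [hki, hji]
        · by_cases hkj : k = j
          · simp [hkj, hji, hji.symm]
          · obtain ⟨h2, h3, h4⟩ := hnotij k hki hkj
            simp only [if_neg hki, if_neg hkj, if_neg h2, if_neg h3, h4]
      · intro k hk
        have hki : k ≠ i := fun h => hk (h ▸ hi)
        have hkj : k ≠ j := fun h => hk (h ▸ hjs)
        simp only [if_neg hki, if_neg hkj]
        exact hout k (fun h => hk (Finset.mem_of_mem_erase (Finset.mem_of_mem_erase h)))
      · intro k hk
        by_cases hki : k = i
        · simp only [if_pos hki]; exact hjs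
        · by_cases hkj : k = j
          · simp only [if_neg hki, if_pos hkj]; exact hi
          · simp only [if_neg hki, if_neg hkj]
            have hks : k ∈ s' := Finset.mem_erase.2 ⟨hkj, Finset.mem_erase.2 ⟨hki, hk⟩⟩
            exact Finset.mem_of_mem_erase (Finset.mem_of_mem_erase (hmem k hks))
      · intro k hk
        by_cases hki : k = i
        · simp only [if_pos hki, hki]; exact hdj
        · by_cases hkj : k = j
          · show d (if k = i then j else if k = j then i else f k) = (d k)⁻¹
            rw [if_neg hki, if_pos hkj, hkj, hdj, inv_inv]
          · simp only [if_neg hki, if_neg hkj]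
            exact hdinv k (Finset.mem_erase.2 ⟨hkj, Finset.mem_erase.2 ⟨hki, hk⟩⟩)
      · intro k hk hdk
        by_cases hki : k = i
        · rw [hki] at hdk; exact absurd hdk h1
        · by_cases hkj : k = j
          · exfalso
            rw [hkj, hdj, inv_inv] at hdk
            exact h1 hdk.symm
          · simp only [if_neg hki, if_neg hkj]
            exact hfixed k (Finset.mem_erase.2 ⟨hkj, Finset.mem_erase.2 ⟨hki, hk⟩⟩) hdk

open Matrix

lemma my_unit_conj_cancel {Mo : Type*} [Monoid Mo] (u : Moˣ) (x : Mo) :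
    (↑u⁻¹ : Mo) * ((u : Mo) * x * ↑u⁻¹) * u = x := by
  simp only [← mul_assoc]
  rw [Units.inv_mul, one_mul, mul_assoc, Units.inv_mul, mul_one]

lemma my_conj_mul {Mo : Type*} [Monoid Mo] (u : Moˣ) (x y : Mo) :
    ((↑u⁻¹ : Mo) * x * u) * ((↑u⁻¹ : Mo) * y * u) = (↑u⁻¹ : Mo) * (x * y) * u := by
  simp only [← mul_assoc]
  rw [mul_assoc ((↑u⁻¹ : Mo) * x), Units.mul_inv, mul_one]

lemma my_build {n : ℕ} (d : Fin n → ℂ) (σ : Equiv.Perm (Fin n)) (ε : Fin n → ℂ)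
    (hσσ : ∀ i, σ (σ i) = i) (hdσ : ∀ i, d (σ i) = (d i)⁻¹) (hd0 : ∀ i, d i ≠ 0)
    (hε : ∀ i, ε i * ε (σ i) = 1) :
    ∃ M : Matrix (Fin n) (Fin n) ℂ,
      M * M = 1 ∧ (M * Matrix.diagonal d) * (M * Matrix.diagonal d) = 1 ∧
      M * (M * Matrix.diagonal d) = Matrix.diagonal d ∧
      M.det = (∏ i, ε i) * ((Equiv.Perm.sign σ : ℤ) : ℂ) := by
  set M : Matrix (Fin n) (Fin n) ℂ := Matrix.of (fun i j => if σ i = j then ε i else 0) with hM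
  have hMapply : ∀ i j, M i j = if σ i = j then ε i else 0 := fun i j => rfl
  have hMM : M * M = 1 := by
    ext i j
    rw [Matrix.mul_apply, Finset.sum_eq_single (σ i)]
    · rw [hMapply, hMapply, if_pos rfl, hσσ i, Matrix.one_apply, mul_ite, mul_zero]
      by_cases h : i = j
      · rw [if_pos h, if_pos h, hε i]
      · rw [if_neg h, if_neg h]
    · intro k _ hk
      rw [hMapply, if_neg (fun h => hk h.symm), zero_mul]
    · intro h; exact absurd (Finset.mem_univ _) h
  have hMD : ∀ i j, (M * Matrix.diagonal d) i j = if σ i = j then ε i * d j else 0 := by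
    intro i j
    rw [Matrix.mul_diagonal, hMapply, ite_mul, zero_mul]
  have hMDM : (M * Matrix.diagonal d) * M = Matrix.diagonal (fun i => (d i)⁻¹) := by
    ext i j
    rw [Matrix.mul_apply, Finset.sum_eq_single (σ i)]
    · rw [hMD, if_pos rfl, hMapply, hσσ i, Matrix.diagonal_apply, mul_ite, mul_zero]
      by_cases h : i = j
      · rw [if_pos h, if_pos h, mul_right_comm, hε i, one_mul, hdσ i]
      · rw [if_neg h, if_neg h]
    · intro k _ hk
      rw [hMD, if_neg (fun h => hk h.symm), zero_mul]
    · intro h; exact absurd (Finset.mem_univ _) h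
  have hMDMD : (M * Matrix.diagonal d) * (M * Matrix.diagonal d) = 1 := by
    rw [← mul_assoc, hMDM, Matrix.diagonal_mul_diagonal]
    have h' : (fun i => (d i)⁻¹ * d i) = fun _ => (1 : ℂ) :=
      funext fun i => inv_mul_cancel₀ (hd0 i)
    rw [h', Matrix.diagonal_one]
  have hMMD : M * (M * Matrix.diagonal d) = Matrix.diagonal d := by
    rw [← mul_assoc, hMM, one_mul]
  have hMeq : M = Matrix.diagonal ε * σ.permMatrix ℂ := by
    ext i j
    rw [Matrix.diagonal_mul, hMapply]
    simp only [Equiv.Perm.permMatrix, PEquiv.toMatrix_apply, Equiv.toPEquiv_apply,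
      Option.mem_def, Option.some.injEq, mul_ite, mul_one, mul_zero]
  refine ⟨M, hMM, hMDMD, hMMD, ?_⟩
  rw [hMeq, Matrix.det_mul, Matrix.det_diagonal, Matrix.det_permutation]
/-- A reversible semisimple (diagonalizable) element `A ∈ SL(n, ℂ)` is strongly reversible in
`SL(n, ℂ)` iff `1` or `-1` is an eigenvalue of `A`, or `n ≢ 2 (mod 4)`. -/
theorem semisimple_strongly_reversible_iff {n : ℕ} (hn : 1 ≤ n)
    (A : Matrix.SpecialLinearGroup (Fin n) ℂ)
    (hss : ∃ (P : (Matrix (Fin n) (Fin n) ℂ)ˣ) (d : Fin n → ℂ),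
      (P : Matrix (Fin n) (Fin n) ℂ) * (A : Matrix (Fin n) (Fin n) ℂ) *
        ((P⁻¹ : (Matrix (Fin n) (Fin n) ℂ)ˣ) : Matrix (Fin n) (Fin n) ℂ) = Matrix.diagonal d)
    (hrev : ∃ g : Matrix.SpecialLinearGroup (Fin n) ℂ, g * A * g⁻¹ = A⁻¹) :
    (∃ g₁ g₂ : Matrix.SpecialLinearGroup (Fin n) ℂ,
        g₁ * g₁ = 1 ∧ g₂ * g₂ = 1 ∧ A = g₁ * g₂) ↔
      ((1 : ℂ) ∈ spectrum ℂ (A : Matrix (Fin n) (Fin n) ℂ) ∨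
        (-1 : ℂ) ∈ spectrum ℂ (A : Matrix (Fin n) (Fin n) ℂ) ∨
        n % 4 ≠ 2) := by
  classical
  haveI : Nonempty (Fin n) := ⟨⟨0, hn⟩⟩
  obtain ⟨P, d, hP⟩ := hss
  obtain ⟨g, hg⟩ := hrev
  set a : Matrix (Fin n) (Fin n) ℂ := (A : Matrix (Fin n) (Fin n) ℂ) with ha
  have hdetD : (Matrix.diagonal d).det = 1 := by
    rw [← hP, Matrix.det_units_conj]
    exact A.det_coe
  have hprodd : ∏ i, d i = 1 := by rw [← Matrix.det_diagonal]; exact hdetD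
  have hd0 : ∀ i, d i ≠ 0 := fun i =>
    Finset.prod_ne_zero_iff.mp (hprodd ▸ one_ne_zero) i (Finset.mem_univ i)
  have haConj : a = (↑P⁻¹ : Matrix (Fin n) (Fin n) ℂ) * Matrix.diagonal d * (↑P : Matrix (Fin n) (Fin n) ℂ) := by
    rw [← hP, my_unit_conj_cancel]
  have hspec : spectrum ℂ a = Set.range d := by
    have h := spectrum.units_conjugate (R := ℂ) (a := a) (u := P)
    rw [hP] at h
    rw [← h, spectrum_diagonal]
  have hba : ((A⁻¹ : Matrix.SpecialLinearGroup (Fin n) ℂ) : Matrix (Fin n) (Fin n) ℂ) * a = 1 := by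
    rw [← Matrix.SpecialLinearGroup.coe_mul, inv_mul_cancel, Matrix.SpecialLinearGroup.coe_one]
  have hab : a * ((A⁻¹ : Matrix.SpecialLinearGroup (Fin n) ℂ) : Matrix (Fin n) (Fin n) ℂ) = 1 := by
    rw [← Matrix.SpecialLinearGroup.coe_mul, mul_inv_cancel, Matrix.SpecialLinearGroup.coe_one]
  set au : (Matrix (Fin n) (Fin n) ℂ)ˣ := ⟨a, _, hab, hba⟩ with hau
  set Du : (Matrix (Fin n) (Fin n) ℂ)ˣ := P * au * P⁻¹ with hDud
  have hDuCoe : (↑Du : Matrix (Fin n) (Fin n) ℂ) = Matrix.diagonal d := by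
    rw [hDud]; simp only [Units.val_mul]; exact hP
  have hDuInvCoe : (↑Du⁻¹ : Matrix (Fin n) (Fin n) ℂ)
      = Matrix.diagonal (fun i => (d i)⁻¹) := by
    have h1 : Matrix.diagonal d * (↑Du⁻¹ : Matrix (Fin n) (Fin n) ℂ) = 1 := by
      rw [← hDuCoe, Units.mul_inv]
    calc (↑Du⁻¹ : Matrix (Fin n) (Fin n) ℂ)
        = (Matrix.diagonal (fun i => (d i)⁻¹) * Matrix.diagonal d) * ↑Du⁻¹ := by
          rw [Matrix.diagonal_mul_diagonal]
          have h' : (fun i => (d i)⁻¹ * d i) = fun _ => (1 : ℂ) :=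
            funext fun i => inv_mul_cancel₀ (hd0 i)
          rw [h', Matrix.diagonal_one, one_mul]
      _ = Matrix.diagonal (fun i => (d i)⁻¹) * (Matrix.diagonal d * ↑Du⁻¹) := by
          rw [mul_assoc]
      _ = Matrix.diagonal (fun i => (d i)⁻¹) := by rw [h1, mul_one]
  constructor
  · -- Forward direction
    rintro ⟨g₁, g₂, h₁, h₂, hA12⟩
    by_cases hone : (1 : ℂ) ∈ spectrum ℂ a
    · exact Or.inl hone
    by_cases hnegone : (-1 : ℂ) ∈ spectrum ℂ a
    · exact Or.inr (Or.inl hnegone)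
    refine Or.inr (Or.inr ?_)
    have hdne : ∀ i, d i ≠ (d i)⁻¹ := by
      intro i he
      have hsq : d i * d i = 1 := by
        calc d i * d i = d i * (d i)⁻¹ := by rw [← he]
          _ = 1 := mul_inv_cancel₀ (hd0 i)
      rcases mul_self_eq_one_iff.1 hsq with h | h
      · exact hone (by rw [hspec]; exact ⟨i, h⟩)
      · exact hnegone (by rw [hspec]; exact ⟨i, h⟩)
    have hg1g1 : (↑g₁ : Matrix (Fin n) (Fin n) ℂ) * (↑g₁ : Matrix (Fin n) (Fin n) ℂ) = 1 := by
      rw [← Matrix.SpecialLinearGroup.coe_mul, h₁, Matrix.SpecialLinearGroup.coe_one]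
    set u₁ : (Matrix (Fin n) (Fin n) ℂ)ˣ := ⟨↑g₁, ↑g₁, hg1g1, hg1g1⟩ with hu₁d
    have hu₁u₁ : u₁ * u₁ = 1 := Units.ext hg1g1
    have hg2g2 : (↑g₂ : Matrix (Fin n) (Fin n) ℂ) * (↑g₂ : Matrix (Fin n) (Fin n) ℂ) = 1 := by
      rw [← Matrix.SpecialLinearGroup.coe_mul, h₂, Matrix.SpecialLinearGroup.coe_one]
    have hu₁au : u₁ * au * (u₁ * au) = 1 := by
      apply Units.ext
      simp only [Units.val_mul, Units.val_one]
      have hc2 : (↑g₁ : Matrix (Fin n) (Fin n) ℂ) * a = ↑g₂ := by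
        rw [ha, hA12, Matrix.SpecialLinearGroup.coe_mul, ← mul_assoc, hg1g1, one_mul]
      show (↑g₁ : Matrix (Fin n) (Fin n) ℂ) * a * ((↑g₁ : Matrix (Fin n) (Fin n) ℂ) * a) = 1
      rw [hc2, hg2g2]
    set w : (Matrix (Fin n) (Fin n) ℂ)ˣ := P * u₁ * P⁻¹ with hwd
    have hww : w * w = 1 := by
      have h1 : w * w = P * (u₁ * u₁) * P⁻¹ := by rw [hwd]; group
      rw [h1, hu₁u₁]; group
    have hkk : (w * Du) * (w * Du) = 1 := by
      have h1 : (w * Du) * (w * Du) = P * (u₁ * au * (u₁ * au)) * P⁻¹ := by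
        rw [hwd, hDud]; group
      rw [h1, hu₁au]; group
    have hcomm : Du⁻¹ * w = w * Du := by
      have h1 : (w * Du)⁻¹ = w * Du := inv_eq_of_mul_eq_one_left hkk
      have h2 : w⁻¹ = w := inv_eq_of_mul_eq_one_left hww
      calc Du⁻¹ * w = Du⁻¹ * w⁻¹ := by rw [h2]
        _ = (w * Du)⁻¹ := (mul_inv_rev w Du).symm
        _ = w * Du := h1
    set h : Matrix (Fin n) (Fin n) ℂ := (↑w : Matrix (Fin n) (Fin n) ℂ) with hhd
    have hcommM : Matrix.diagonal (fun i => (d i)⁻¹) * h = h * Matrix.diagonal d := by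
      have hc := congrArg Units.val hcomm
      simp only [Units.val_mul] at hc
      rw [hDuCoe, hDuInvCoe] at hc
      exact hc
    have hdiag0 : ∀ i, h i i = 0 := by
      intro i
      have he := congrFun (congrFun hcommM i) i
      rw [Matrix.diagonal_mul, Matrix.mul_diagonal] at he
      by_contra h0
      apply hdne i
      have he' : (d i)⁻¹ * h i i = d i * h i i := by rw [he, mul_comm]
      exact (mul_right_cancel₀ h0 he').symm
    have htr : h.trace = 0 := by
      unfold Matrix.trace Matrix.diag
      exact Finset.sum_eq_zero fun i _ => hdiag0 i
    have hh : h * h = 1 := by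
      have hc := congrArg Units.val hww
      simp only [Units.val_mul, Units.val_one] at hc
      exact hc
    have hdeth : h.det = 1 := by
      rw [hhd, hwd]
      simp only [Units.val_mul]
      rw [Matrix.det_units_conj]
      exact g₁.det_coe
    have hsplits : (Matrix.charpoly h).Splits := IsAlgClosed.splits _
    have hdeg : (Matrix.charpoly h).natDegree = n := by
      rw [Matrix.charpoly_natDegree_eq_dim, Fintype.card_fin]
    have hcard : Multiset.card (Matrix.charpoly h).roots = n :=
      (Polynomial.splits_iff_card_roots.mp hsplits).trans hdeg
    have hsum : (Matrix.charpoly h).roots.sum = 0 := by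
      rw [← Matrix.trace_eq_sum_roots_charpoly, htr]
    have hprodr : (Matrix.charpoly h).roots.prod = 1 := by
      rw [← Matrix.det_eq_prod_roots_charpoly, hdeth]
    have hpm : ∀ μ ∈ (Matrix.charpoly h).roots, μ = 1 ∨ μ = -1 := by
      intro μ hμ
      have hroot : (Matrix.charpoly h).IsRoot μ := Polynomial.isRoot_of_mem_roots hμ
      have hs : μ ∈ spectrum ℂ h := my_mem_spectrum_of_root h μ hroot
      have hmem2 : μ ^ 2 ∈ spectrum ℂ (Polynomial.aeval h (Polynomial.X ^ 2 : Polynomial ℂ)) :=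
        spectrum.subset_polynomial_aeval h (Polynomial.X ^ 2 : Polynomial ℂ) ⟨μ, hs, by simp⟩
      rw [map_pow, Polynomial.aeval_X, sq, hh, spectrum.one_eq] at hmem2
      have hsq : μ * μ = 1 := by rw [← sq]; exact Set.mem_singleton_iff.1 hmem2
      exact mul_self_eq_one_iff.1 hsq
    set R := (Matrix.charpoly h).roots with hR
    set q := Multiset.card (R.filter fun μ => μ = -1) with hq
    set q' := Multiset.card (R.filter fun μ => ¬ μ = -1) with hq'
    have hfneg : R.filter (fun μ => μ = -1) = Multiset.replicate q (-1) :=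
      Multiset.eq_replicate_card.2 fun b hb => (Multiset.mem_filter.1 hb).2
    have hfpos : R.filter (fun μ => ¬ μ = -1) = Multiset.replicate q' 1 := by
      apply Multiset.eq_replicate_card.2
      intro b hb
      rcases Multiset.mem_filter.1 hb with ⟨hbR, hbne⟩
      rcases hpm b hbR with hb1 | hb1
      · exact hb1
      · exact absurd hb1 hbne
    have hadd : R.filter (fun μ => μ = -1) + R.filter (fun μ => ¬ μ = -1) = R :=
      Multiset.filter_add_not _ _
    have hcards : q + q' = n := by
      rw [hq, hq', ← Multiset.card_add, hadd]
      exact hcard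
    have hsum2 : (q : ℂ) * (-1) + (q' : ℂ) = 0 := by
      have hs' : R.sum = q • (-1 : ℂ) + q' • (1 : ℂ) := by
        conv_lhs => rw [← hadd]
        rw [Multiset.sum_add, hfneg, hfpos, Multiset.sum_replicate, Multiset.sum_replicate]
      rw [hsum] at hs'
      simpa [nsmul_eq_mul] using hs'.symm
    have hqq' : q' = q := by
      have hc : (q' : ℂ) = (q : ℂ) := by linear_combination hsum2
      exact_mod_cast hc
    have hprod2 : (-1 : ℂ) ^ q = 1 := by
      have hp' : R.prod = (-1 : ℂ) ^ q * 1 ^ q' := by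
        conv_lhs => rw [← hadd]
        rw [Multiset.prod_add, hfneg, hfpos, Multiset.prod_replicate, Multiset.prod_replicate]
      rw [hprodr] at hp'
      simpa using hp'.symm
    have hqeven : Even q := by
      by_contra hodd
      rw [Nat.not_even_iff_odd] at hodd
      rw [Odd.neg_one_pow hodd] at hprod2
      norm_num at hprod2
    obtain ⟨t, ht⟩ := hqeven
    omega
  · -- Backward direction
    intro hrhs
    have hfinish : ∀ M : Matrix (Fin n) (Fin n) ℂ, M * M = 1 →
        (M * Matrix.diagonal d) * (M * Matrix.diagonal d) = 1 →
        M * (M * Matrix.diagonal d) = Matrix.diagonal d → M.det = 1 →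
        ∃ g₁ g₂ : Matrix.SpecialLinearGroup (Fin n) ℂ,
          g₁ * g₁ = 1 ∧ g₂ * g₂ = 1 ∧ A = g₁ * g₂ := by
      intro M hMM hNN hMN hdetM
      have hdet1 : ((↑P⁻¹ : Matrix (Fin n) (Fin n) ℂ) * M * (↑P : Matrix (Fin n) (Fin n) ℂ)).det = 1 := by
        rw [Matrix.det_units_conj']; exact hdetM
      have hdet2 : ((↑P⁻¹ : Matrix (Fin n) (Fin n) ℂ) * (M * Matrix.diagonal d) * (↑P : Matrix (Fin n) (Fin n) ℂ)).det = 1 := by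
        rw [Matrix.det_units_conj', Matrix.det_mul, hdetM, hdetD, one_mul]
      refine ⟨⟨_, hdet1⟩, ⟨_, hdet2⟩, ?_, ?_, ?_⟩
      · apply Subtype.ext
        show ((↑P⁻¹ : Matrix (Fin n) (Fin n) ℂ) * M * (↑P : Matrix (Fin n) (Fin n) ℂ)) *
          ((↑P⁻¹ : Matrix (Fin n) (Fin n) ℂ) * M * (↑P : Matrix (Fin n) (Fin n) ℂ)) = 1
        rw [my_conj_mul, hMM, mul_one, Units.inv_mul]
      · apply Subtype.ext
        show ((↑P⁻¹ : Matrix (Fin n) (Fin n) ℂ) * (M * Matrix.diagonal d) * (↑P : Matrix (Fin n) (Fin n) ℂ)) *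
          ((↑P⁻¹ : Matrix (Fin n) (Fin n) ℂ) * (M * Matrix.diagonal d) * (↑P : Matrix (Fin n) (Fin n) ℂ)) = 1
        rw [my_conj_mul, hNN, mul_one, Units.inv_mul]
      · apply Subtype.ext
        show a = ((↑P⁻¹ : Matrix (Fin n) (Fin n) ℂ) * M * (↑P : Matrix (Fin n) (Fin n) ℂ)) *
          ((↑P⁻¹ : Matrix (Fin n) (Fin n) ℂ) * (M * Matrix.diagonal d) * (↑P : Matrix (Fin n) (Fin n) ℂ))
        rw [my_conj_mul, hMN, ← haConj]
    -- pairing from reversibility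
    have hgmul : (↑g : Matrix (Fin n) (Fin n) ℂ) * (↑(g⁻¹) : Matrix (Fin n) (Fin n) ℂ) = 1 := by
      rw [← Matrix.SpecialLinearGroup.coe_mul, mul_inv_cancel, Matrix.SpecialLinearGroup.coe_one]
    have hgmul' : (↑(g⁻¹) : Matrix (Fin n) (Fin n) ℂ) * (↑g : Matrix (Fin n) (Fin n) ℂ) = 1 := by
      rw [← Matrix.SpecialLinearGroup.coe_mul, inv_mul_cancel, Matrix.SpecialLinearGroup.coe_one]
    set gu : (Matrix (Fin n) (Fin n) ℂ)ˣ := ⟨↑g, ↑(g⁻¹), hgmul, hgmul'⟩ with hgud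
    have hauinv : gu * au * gu⁻¹ = au⁻¹ := by
      apply Units.ext
      simp only [Units.val_mul]
      show (↑g : Matrix (Fin n) (Fin n) ℂ) * a * (↑(g⁻¹) : Matrix (Fin n) (Fin n) ℂ)
        = ((A⁻¹ : Matrix.SpecialLinearGroup (Fin n) ℂ) : Matrix (Fin n) (Fin n) ℂ)
      rw [← hg, Matrix.SpecialLinearGroup.coe_mul, Matrix.SpecialLinearGroup.coe_mul]
    have hconj : (↑(P * gu * P⁻¹) : Matrix (Fin n) (Fin n) ℂ) * (↑Du : Matrix (Fin n) (Fin n) ℂ) *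
        (↑(P * gu * P⁻¹)⁻¹ : Matrix (Fin n) (Fin n) ℂ) = (↑Du⁻¹ : Matrix (Fin n) (Fin n) ℂ) := by
      have huu : (P * gu * P⁻¹) * Du * (P * gu * P⁻¹)⁻¹ = Du⁻¹ := by
        have h1 : (P * gu * P⁻¹) * Du * (P * gu * P⁻¹)⁻¹ = P * (gu * au * gu⁻¹) * P⁻¹ := by
          rw [hDud]; group
        rw [h1, hauinv, hDud]
        group
      have hc := congrArg Units.val huu
      simp only [Units.val_mul] at hc ⊢
      exact hc
    have hcp : (Matrix.diagonal (fun i => (d i)⁻¹)).charpoly = (Matrix.diagonal d).charpoly := by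
      rw [← hDuCoe, ← hDuInvCoe, ← hconj, my_charpoly_units_conj]
    have hmults : Multiset.map (fun i => (d i)⁻¹) Finset.univ.val
        = Multiset.map d Finset.univ.val := by
      rw [← my_roots_charpoly_diagonal, ← my_roots_charpoly_diagonal, hcp]
    have H : ∀ c : ℂ, (Finset.univ.filter fun i : Fin n => d i = c).card
        = (Finset.univ.filter fun i : Fin n => d i = c⁻¹).card := by
      intro c
      have hcnt := congrArg (Multiset.count c) hmults
      rw [Multiset.count_map, Multiset.count_map] at hcnt
      have e1 : (Finset.univ.filter fun i : Fin n => d i = c).val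
          = Multiset.filter (fun i => c = d i) Finset.univ.val := by
        rw [Finset.filter_val]
        apply Multiset.filter_congr
        intro x _
        exact eq_comm
      have e2 : (Finset.univ.filter fun i : Fin n => d i = c⁻¹).val
          = Multiset.filter (fun i => c = (d i)⁻¹) Finset.univ.val := by
        rw [Finset.filter_val]
        apply Multiset.filter_congr
        intro x _
        constructor
        · intro hx; rw [hx, inv_inv]
        · intro hx; rw [hx, inv_inv]
      have e3 : Multiset.card (Finset.univ.filter fun i : Fin n => d i = c).val
          = Multiset.card (Finset.univ.filter fun i : Fin n => d i = c⁻¹).val := by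
        rw [e1, e2, ← hcnt]
      exact e3
    obtain ⟨f, hfinv, _, _, hdinvf, hfixed⟩ := my_pairing d Finset.univ (fun c => H c)
    have hdσ : ∀ i, d (f i) = (d i)⁻¹ := fun i => hdinvf i (Finset.mem_univ i)
    set σ : Equiv.Perm (Fin n) := Function.Involutive.toPerm f hfinv with hσd
    have hσapp : ∀ i, σ i = f i := fun i => rfl
    have hσσ : ∀ i, σ (σ i) = i := fun i => hfinv i
    have hdσ' : ∀ i, d (σ i) = (d i)⁻¹ := fun i => hdσ i
    by_cases hfix : ∃ i₀, d i₀ = (d i₀)⁻¹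
    · obtain ⟨i₀, hi₀⟩ := hfix
      have hσi₀ : σ i₀ = i₀ := hfixed i₀ (Finset.mem_univ _) hi₀
      rcases Int.units_eq_one_or (Equiv.Perm.sign σ) with hs | hs
      · obtain ⟨M, hMM, hNN, hMN, hdet⟩ :=
          my_build d σ (fun _ => 1) hσσ hdσ' hd0 (fun i => one_mul 1)
        exact hfinish M hMM hNN hMN (by rw [hdet, hs]; simp)
      · set ε : Fin n → ℂ := fun i => if i = i₀ then -1 else 1 with hεd
        have hεc : ∀ i, ε i * ε (σ i) = 1 := by
          intro i
          by_cases hii : i = i₀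
          · rw [hii, hσi₀]; simp [hεd]
          · have hσii : σ i ≠ i₀ := fun hc => hii (by
              have : σ i = σ i₀ := by rw [hσi₀]; exact hc
              exact σ.injective this)
            simp [hεd, hii, hσii]
        obtain ⟨M, hMM, hNN, hMN, hdet⟩ := my_build d σ ε hσσ hdσ' hd0 hεc
        have hprodε : ∏ i, ε i = -1 := by
          rw [Finset.prod_eq_single i₀ (fun b _ hb => if_neg hb)
            (fun hb => absurd (Finset.mem_univ i₀) hb)]
          simp [hεd]
        refine hfinish M hMM hNN hMN ?_
        rw [hdet, hprodε, hs]
        norm_num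
    · have hne2 : n % 4 ≠ 2 := by
        rcases hrhs with hcase | hcase | hcase
        · rw [hspec] at hcase
          obtain ⟨i, hi⟩ := hcase
          exact absurd ⟨i, by rw [hi, inv_one]⟩ hfix
        · rw [hspec] at hcase
          obtain ⟨i, hi⟩ := hcase
          exact absurd ⟨i, by rw [hi]; norm_num⟩ hfix
        · exact hcase
      have hσne : ∀ i, σ i ≠ i := fun i hc =>
        hfix ⟨i, by rw [← hdσ' i, hc]⟩
      have hsupp : σ.support = Finset.univ :=
        Finset.eq_univ_iff_forall.2 fun i => Equiv.Perm.mem_support.2 (hσne i)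
      have hσσ1 : σ * σ = 1 := Equiv.ext fun i => hσσ i
      obtain ⟨k, hk, hsgn⟩ := my_sign_involution σ.support.card σ le_rfl hσσ1
      have hnk : n = 2 * k := by
        rw [← hk, hsupp, Finset.card_univ, Fintype.card_fin]
      have hkeven : Even k := by
        rcases Nat.even_or_odd k with hek | hek
        · exact hek
        · obtain ⟨t, ht⟩ := hek
          omega
      have hs1 : Equiv.Perm.sign σ = 1 := by rw [hsgn, hkeven.neg_one_pow]
      obtain ⟨M, hMM, hNN, hMN, hdet⟩ :=
        my_build d σ (fun _ => 1) hσσ hdσ' hd0 (fun i => one_mul 1)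
      exact hfinish M hMM hNN hMN (by rw [hdet, hs1]; simp)
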